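/- For every m ≥ 3, the Laurent polynomial V' m is nonzero and maxdeg (V' m) = 5m - 3. (At m = 3 this is the degree 12 of Q₃', and the recurrence increases the top degree by 5 at each step since the second term has strictly smaller degree.) -/

import Mathlib

open LaurentPolynomial

noncomputable def U : LaurentPolynomial ℤ := -T 1 - T (-1)

noncomputable def Q3' : LaurentPolynomial ℤ :=
  -T 12 + T 10 + T 6 + 2 * T 4 + 2 * T 2 + 6 + 2 * T (-2) + 2 * T (-4) + T (-6)
    + T (-10) - T (-12)

/-- The maximum exponent in the support of a Laurent polynomial. -/
noncomputable def maxdeg (p : LaurentPolynomial ℤ) : WithBot ℤ := p.coeff.support.max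

/-- The minimum exponent in the support of a Laurent polynomial. -/
noncomputable def mindeg (p : LaurentPolynomial ℤ) : WithTop ℤ := p.coeff.support.min

namespace MaxdegAux

lemma sub_apply' (f g : LaurentPolynomial ℤ) (n : ℤ) : (f - g).coeff n = f.coeff n - g.coeff n := rfl

lemma add_apply' (f g : LaurentPolynomial ℤ) (n : ℤ) : (f + g).coeff n = f.coeff n + g.coeff n := rfl

lemma neg_apply' (f : LaurentPolynomial ℤ) (n : ℤ) : (-f).coeff n = -(f.coeff n) := rfl

lemma T_apply (n m : ℤ) : (T n : LaurentPolynomial ℤ).coeff m = if n = m then 1 else 0 := by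
  exact LaurentPolynomial.T_apply m n

lemma smul2_apply (f : LaurentPolynomial ℤ) (n : ℤ) : (2 * f).coeff n = 2 * (f.coeff n) := by
  have : (2 : LaurentPolynomial ℤ) * f = 2 • f := by
    rw [two_smul, two_mul]
  rw [this]
  rfl

lemma six_apply (m : ℤ) : (6 : LaurentPolynomial ℤ).coeff m = if (0:ℤ) = m then 6 else 0 := by
  have : (6 : LaurentPolynomial ℤ).coeff = Finsupp.single 0 6 := by
    exact AddMonoidAlgebra.coeff_ofNat 6
  rw [this, Finsupp.single_apply]

lemma maxdeg_eq' {p : LaurentPolynomial ℤ} {n : ℤ} (h1 : p.coeff n ≠ 0)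
    (h2 : ∀ m : ℤ, p.coeff m ≠ 0 → m ≤ n) : maxdeg p = (n : WithBot ℤ) := by
  have hmem : n ∈ p.coeff.support := Finsupp.mem_support_iff.2 h1
  refine le_antisymm ?_ (Finset.le_max hmem)
  refine Finset.max_le fun b hb => ?_
  exact_mod_cast h2 b (Finsupp.mem_support_iff.1 hb)

lemma maxdeg_coeff {p : LaurentPolynomial ℤ} {n : ℤ} (h : maxdeg p = (n : WithBot ℤ)) :
    p.coeff n ≠ 0 := by
  have : n ∈ p.coeff.support := Finset.mem_of_max h
  exact Finsupp.mem_support_iff.1 this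

lemma maxdeg_le {p : LaurentPolynomial ℤ} {n : ℤ} (h : maxdeg p = (n : WithBot ℤ)) :
    ∀ m : ℤ, p.coeff m ≠ 0 → m ≤ n := by
  intro m hm
  have : (m : WithBot ℤ) ≤ p.coeff.support.max := Finset.le_max (Finsupp.mem_support_iff.2 hm)
  rw [show p.coeff.support.max = maxdeg p from rfl, h] at this
  exact_mod_cast this

lemma ne_zero_of_maxdeg {p : LaurentPolynomial ℤ} {n : ℤ}
    (h : maxdeg p = (n : WithBot ℤ)) : p ≠ 0 := by
  intro h0
  exact maxdeg_coeff h (by rw [h0]; rfl)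

lemma coeff_mul_top (p q : LaurentPolynomial ℤ) {a b : ℤ}
    (hp : ∀ m : ℤ, p.coeff m ≠ 0 → m ≤ a) (hq : ∀ m : ℤ, q.coeff m ≠ 0 → m ≤ b) :
    (p * q).coeff (a + b) = p.coeff a * q.coeff b := by
  classical
  rw [AddMonoidAlgebra.coeff_mul, Finsupp.sum]
  rw [Finset.sum_eq_single a]
  · rw [Finsupp.sum, Finset.sum_eq_single b]
    · rw [if_pos rfl]
    · intro y hy hne
      have hyb : y ≤ b := hq y (Finsupp.mem_support_iff.1 hy)
      exact if_neg (by omega)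
    · intro hb
      rw [if_pos rfl, Finsupp.notMem_support_iff.1 hb, mul_zero]
  · intro x hx hne
    have hxa : x ≤ a := hp x (Finsupp.mem_support_iff.1 hx)
    refine Finset.sum_eq_zero fun y hy => ?_
    have hyb : y ≤ b := hq y (Finsupp.mem_support_iff.1 hy)
    exact if_neg (by omega)
  · intro ha
    refine Finset.sum_eq_zero fun y _ => ?_
    rw [Finsupp.notMem_support_iff.1 ha]
    simp

lemma maxdeg_mul' {p q : LaurentPolynomial ℤ} {a b : ℤ}
    (hp : maxdeg p = (a : WithBot ℤ)) (hq : maxdeg q = (b : WithBot ℤ)) :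
    maxdeg (p * q) = ((a + b : ℤ) : WithBot ℤ) := by
  apply maxdeg_eq'
  · rw [coeff_mul_top p q (maxdeg_le hp) (maxdeg_le hq)]
    exact mul_ne_zero (maxdeg_coeff hp) (maxdeg_coeff hq)
  · intro m hm
    have hmem : m ∈ (p * q).coeff.support := Finsupp.mem_support_iff.2 hm
    have := AddMonoidAlgebra.support_coeff_mul_subset p q hmem
    rw [Finset.mem_add] at this
    obtain ⟨x, hx, y, hy, rfl⟩ := this
    have hxa : x ≤ a := maxdeg_le hp x (Finsupp.mem_support_iff.1 hx)
    have hyb : y ≤ b := maxdeg_le hq y (Finsupp.mem_support_iff.1 hy)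
    omega

lemma maxdeg_sub {p q : LaurentPolynomial ℤ} {a b : ℤ}
    (hp : maxdeg p = (a : WithBot ℤ)) (hq : maxdeg q = (b : WithBot ℤ)) (h : b < a) :
    maxdeg (p - q) = (a : WithBot ℤ) := by
  apply maxdeg_eq'
  · rw [sub_apply']
    have hqa : q.coeff a = 0 := by
      by_contra hqa
      exact absurd (maxdeg_le hq a hqa) (by omega)
    rw [hqa, sub_zero]
    exact maxdeg_coeff hp
  · intro m hm
    rw [sub_apply'] at hm
    rcases eq_or_ne (p.coeff m) 0 with hpm | hpm
    · have hqm : q.coeff m ≠ 0 := by intro h0; rw [hpm, h0] at hm; exact hm (by ring)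
      have := maxdeg_le hq m hqm
      omega
    · exact maxdeg_le hp m hpm

lemma maxdeg_F :
    maxdeg (T 5 - T 3 - T (-3) + T (-5) : LaurentPolynomial ℤ) = ((5 : ℤ) : WithBot ℤ) := by
  apply maxdeg_eq'
  · simp only [add_apply', sub_apply', T_apply]
    norm_num
  · intro m hm
    by_contra hb
    push_neg at hb
    simp only [add_apply', sub_apply', T_apply] at hm
    split_ifs at hm <;> omega

lemma maxdeg_G :
    maxdeg (T 5 - T 3 - T 1 + T (-1) - T (-3) + T (-5) : LaurentPolynomial ℤ)
      = ((5 : ℤ) : WithBot ℤ) := by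
  apply maxdeg_eq'
  · simp only [add_apply', sub_apply', T_apply]
    norm_num
  · intro m hm
    by_contra hb
    push_neg at hb
    simp only [add_apply', sub_apply', T_apply] at hm
    split_ifs at hm <;> omega

lemma maxdeg_U : maxdeg U = ((1 : ℤ) : WithBot ℤ) := by
  apply maxdeg_eq'
  · simp only [U, sub_apply', neg_apply', T_apply]
    norm_num
  · intro m hm
    by_contra hb
    push_neg at hb
    simp only [U, sub_apply', neg_apply', T_apply] at hm
    split_ifs at hm <;> omega

lemma maxdeg_one : maxdeg (1 : LaurentPolynomial ℤ) = ((0 : ℤ) : WithBot ℤ) := by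
  apply maxdeg_eq'
  · rw [show (1 : LaurentPolynomial ℤ) = T 0 from rfl, T_apply]
    norm_num
  · intro m hm
    by_contra hb
    push_neg at hb
    rw [show (1 : LaurentPolynomial ℤ) = T 0 from rfl, T_apply] at hm
    split_ifs at hm <;> omega

lemma maxdeg_U_pow (k : ℕ) : maxdeg (U ^ k) = ((k : ℤ) : WithBot ℤ) := by
  induction k with
  | zero => simpa using maxdeg_one
  | succ n ih =>
    rw [pow_succ]
    have := maxdeg_mul' ih maxdeg_U
    rw [this]
    push_cast
    ring_nf

set_option maxHeartbeats 1000000 in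
lemma maxdeg_Q3' : maxdeg Q3' = ((12 : ℤ) : WithBot ℤ) := by
  apply maxdeg_eq'
  · simp only [Q3', add_apply', sub_apply', neg_apply', T_apply, smul2_apply, six_apply]
    norm_num
  · intro m hm
    by_contra hb
    push_neg at hb
    simp only [Q3', add_apply', sub_apply', neg_apply', T_apply, smul2_apply, six_apply] at hm
    rw [if_neg (by omega : ¬((12:ℤ) = m)), if_neg (by omega : ¬((10:ℤ) = m)),
      if_neg (by omega : ¬((6:ℤ) = m)), if_neg (by omega : ¬((4:ℤ) = m)),
      if_neg (by omega : ¬((2:ℤ) = m)), if_neg (by omega : ¬((0:ℤ) = m)),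
      if_neg (by omega : ¬((-2:ℤ) = m)), if_neg (by omega : ¬((-4:ℤ) = m)),
      if_neg (by omega : ¬((-6:ℤ) = m)), if_neg (by omega : ¬((-10:ℤ) = m)),
      if_neg (by omega : ¬((-12:ℤ) = m))] at hm
    norm_num at hm

end MaxdegAux

open MaxdegAux in
/-- For every `m ≥ 3`, `V' m` is nonzero and has top degree `5 * m - 3` in `z`. -/
theorem maxdeg_V' (V' : ℕ → LaurentPolynomial ℤ) (hV3 : V' 3 = Q3')
    (hVrec : ∀ m : ℕ, 3 ≤ m → V' (m + 1) =
      V' m * (T 5 - T 3 - T (-3) + T (-5)) -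
        U ^ (m + 1) * (T 5 - T 3 - T 1 + T (-1) - T (-3) + T (-5))) :
    ∀ m : ℕ, 3 ≤ m →
      V' m ≠ 0 ∧ maxdeg (V' m) = ((5 * (m : ℤ) - 3 : ℤ) : WithBot ℤ) := by
  intro m hm
  induction m, hm using Nat.le_induction with
  | base =>
    have h : maxdeg (V' 3) = ((12 : ℤ) : WithBot ℤ) := by rw [hV3]; exact maxdeg_Q3'
    refine ⟨ne_zero_of_maxdeg h, ?_⟩
    rw [h]; norm_num
  | succ n hn ih =>
    obtain ⟨hne, hdeg⟩ := ih
    have h1 : maxdeg (V' n * (T 5 - T 3 - T (-3) + T (-5)))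
        = ((5 * (n : ℤ) - 3 + 5 : ℤ) : WithBot ℤ) := maxdeg_mul' hdeg maxdeg_F
    have h2 : maxdeg (U ^ (n + 1) * (T 5 - T 3 - T 1 + T (-1) - T (-3) + T (-5)))
        = ((((n : ℤ) + 1) + 5 : ℤ) : WithBot ℤ) := by
      have := maxdeg_mul' (maxdeg_U_pow (n + 1)) maxdeg_G
      rw [this]; push_cast; ring_nf
    have hcast : (3 : ℤ) ≤ (n : ℤ) := by exact_mod_cast hn
    have hlt : ((n : ℤ) + 1) + 5 < 5 * (n : ℤ) - 3 + 5 := by omega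
    have h : maxdeg (V' (n + 1)) = ((5 * (n : ℤ) - 3 + 5 : ℤ) : WithBot ℤ) := by
      rw [hVrec n hn]
      exact maxdeg_sub h1 h2 hlt
    refine ⟨ne_zero_of_maxdeg h, ?_⟩
    rw [h]
    congr 1
    push_cast
    ring
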